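/- For each integer m ≥ 2, the curve γ_m : R → R² is a regular curve, i.e. γ_m'(θ) ≠ 0 for all θ ∈ R, where γ_m(θ) = ( ((m−1)² cos(m+1)θ + (m+1)² cos(m−1)θ)/(4m), ((m−1)² sin(m+1)θ − (m+1)² sin(m−1)θ)/(4m) ). -/

import Mathlib

/-- The limit curve γ_m of the type I exceptional catenoid. -/
noncomputable def gammaM (m : ℕ) (θ : ℝ) : ℝ × ℝ :=
  ((((m:ℝ) - 1)^2 * Real.cos (((m:ℝ) + 1)*θ) + ((m:ℝ) + 1)^2 * Real.cos (((m:ℝ) - 1)*θ)) / (4*m),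
   (((m:ℝ) - 1)^2 * Real.sin (((m:ℝ) + 1)*θ) - ((m:ℝ) + 1)^2 * Real.sin (((m:ℝ) - 1)*θ)) / (4*m))

lemma gammaM_hasDerivAt (m : ℕ) (θ : ℝ) :
    HasDerivAt (gammaM m)
      ((((m:ℝ) - 1)^2 * (-Real.sin (((m:ℝ) + 1)*θ) * ((m:ℝ) + 1)) + ((m:ℝ) + 1)^2 * (-Real.sin (((m:ℝ) - 1)*θ) * ((m:ℝ) - 1))) / (4*m),
       (((m:ℝ) - 1)^2 * (Real.cos (((m:ℝ) + 1)*θ) * ((m:ℝ) + 1)) - ((m:ℝ) + 1)^2 * (Real.cos (((m:ℝ) - 1)*θ) * ((m:ℝ) - 1))) / (4*m)) θ := by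
  set a : ℝ := (m:ℝ) - 1
  set b : ℝ := (m:ℝ) + 1
  have hb : HasDerivAt (fun θ : ℝ => b * θ) b θ := by
    simpa using (hasDerivAt_id θ).const_mul b
  have ha : HasDerivAt (fun θ : ℝ => a * θ) a θ := by
    simpa using (hasDerivAt_id θ).const_mul a
  exact (HasDerivAt.prodMk (((hb.cos.const_mul (a^2)).add (ha.cos.const_mul (b^2))).div_const (4*m))
    (((hb.sin.const_mul (a^2)).sub (ha.sin.const_mul (b^2))).div_const (4*m)))

/-- γ_m is a regular curve: its derivative never vanishes. -/
theorem stmt8 (m : ℕ) (hm : 2 ≤ m) (θ : ℝ) :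
    deriv (gammaM m) θ ≠ 0 := by
  rw [(gammaM_hasDerivAt m θ).deriv]
  set a : ℝ := (m:ℝ) - 1 with ha
  set b : ℝ := (m:ℝ) + 1 with hb
  have hm' : (2:ℝ) ≤ (m:ℝ) := by exact_mod_cast hm
  have ha1 : 1 ≤ a := by simp [ha]; linarith
  have hb1 : 3 ≤ b := by simp [hb]; linarith
  have hm0 : (4:ℝ)*m ≠ 0 := by positivity
  intro h
  rw [Prod.ext_iff] at h
  obtain ⟨h1, h2⟩ := h
  simp only [Prod.fst_zero, Prod.snd_zero, div_eq_zero_iff, hm0, or_false] at h1 h2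
  have hab : (0:ℝ) < a*b := by nlinarith
  have e1 : a * Real.sin (b*θ) + b * Real.sin (a*θ) = 0 := by
    have h1' : a*b * (a * Real.sin (b*θ) + b * Real.sin (a*θ)) = 0 := by linear_combination -h1
    exact (mul_eq_zero.mp h1').resolve_left (ne_of_gt hab)
  have e2 : a * Real.cos (b*θ) - b * Real.cos (a*θ) = 0 := by
    have h2' : a*b * (a * Real.cos (b*θ) - b * Real.cos (a*θ)) = 0 := by linear_combination h2
    exact (mul_eq_zero.mp h2').resolve_left (ne_of_gt hab)
  have hs := Real.sin_sq_add_cos_sq (b*θ)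
  have hs' := Real.sin_sq_add_cos_sq (a*θ)
  have key : a^2 = b^2 := by
    linear_combination (a*Real.sin (b*θ) - b*Real.sin (a*θ))*e1 +
      (a*Real.cos (b*θ) + b*Real.cos (a*θ))*e2 - a^2*hs + b^2*hs'
  nlinarith [key]
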